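/- arXiv:1811.09859 — 2 statements merged into one kernel-verified Lean document; each statement's English description precedes it below -/
import Mathlib

section
/- Let V be a finite-dimensional complex vector space, let A, B, C be linear endomorphisms of V, let r be a natural number and v₁, …, v_r ∈ V, and let θ₁, θ₂ be real numbers with θ₁ > θ₂. Then the framed representation M̃ = (V, A, B, C, v₁, …, v_r) is θ-stable if and only if v₁, …, v_r jointly generate V (i.e. the only ℂ-subspace W ⊆ V with A(W) ⊆ W, B(W) ⊆ W, C(W) ⊆ W and vᵢ ∈ W for all i is W = V). -/
/-!
Framed representations of the 3-loop quiver with `r` framings and dimension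
vector `(1, dim V)`: a tuple `(V, A, B, C, v₁, …, v_r)` with `A B C : V →ₗ[ℂ] V`
and `v i ∈ V`.  A framed subrepresentation is a pair `(ε, W)` with `ε ∈ {0, 1}`
and `W ⊆ V` an `A, B, C`-invariant subspace containing all `v i` when `ε = 1`.
Its slope is `μ(ε, W) = (ε·θ₁ + θ₂·dim W)/(ε + dim W)`.
-/

/-- The slope `μ(ε, W) = (ε·θ₁ + θ₂·dim W)/(ε + dim W)` of a framed
subrepresentation. -/
noncomputable def framedSlope {V : Type*} [AddCommGroup V] [Module ℂ V]
    (θ₁ θ₂ : ℝ) (ε : ℕ) (W : Submodule ℂ V) : ℝ :=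
  ((ε : ℝ) * θ₁ + θ₂ * (Module.finrank ℂ W : ℝ)) / ((ε : ℝ) + (Module.finrank ℂ W : ℝ))

/-- `(ε, W)` is a framed subrepresentation of `(V, A, B, C, v)`. -/
def IsFramedSubrep {V : Type*} [AddCommGroup V] [Module ℂ V]
    (A B C : V →ₗ[ℂ] V) {r : ℕ} (v : Fin r → V) (ε : ℕ) (W : Submodule ℂ V) : Prop :=
  ε ≤ 1 ∧ (∀ x ∈ W, A x ∈ W) ∧ (∀ x ∈ W, B x ∈ W) ∧ (∀ x ∈ W, C x ∈ W) ∧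
    (ε = 1 → ∀ i, v i ∈ W)

/-- `θ`-stability of the framed representation `(V, A, B, C, v)`: every framed
subrepresentation `(ε, W)` different from `(0, 0)` and from `(1, V)` has slope
strictly smaller than `μ(1, V)`. -/
def FramedStable {V : Type*} [AddCommGroup V] [Module ℂ V]
    (θ₁ θ₂ : ℝ) (A B C : V →ₗ[ℂ] V) {r : ℕ} (v : Fin r → V) : Prop :=
  ∀ (ε : ℕ) (W : Submodule ℂ V), IsFramedSubrep A B C v ε W →
    ¬(ε = 0 ∧ W = ⊥) → ¬(ε = 1 ∧ W = ⊤) →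
    framedSlope θ₁ θ₂ ε W < framedSlope θ₁ θ₂ 1 (⊤ : Submodule ℂ V)

/-- The vectors `v₁, …, v_r` jointly generate `V` under `A, B, C`: the only
invariant subspace containing all of them is `V` itself. -/
def JointlyGenerate {V : Type*} [AddCommGroup V] [Module ℂ V]
    (A B C : V →ₗ[ℂ] V) {r : ℕ} (v : Fin r → V) : Prop :=
  ∀ W : Submodule ℂ V, (∀ x ∈ W, A x ∈ W) → (∀ x ∈ W, B x ∈ W) → (∀ x ∈ W, C x ∈ W) →
    (∀ i, v i ∈ W) → W = ⊤

/-- **Proposition 2.4.** For `θ₁ > θ₂`, the framed representation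
`(V, A, B, C, v₁, …, v_r)` is `θ`-stable if and only if the vectors
`v₁, …, v_r` jointly generate `V`. -/
theorem framedStable_iff_jointlyGenerate
    {V : Type*} [AddCommGroup V] [Module ℂ V] [FiniteDimensional ℂ V]
    (A B C : V →ₗ[ℂ] V) (r : ℕ) (v : Fin r → V)
    (θ₁ θ₂ : ℝ) (hθ : θ₁ > θ₂) :
    FramedStable θ₁ θ₂ A B C v ↔ JointlyGenerate A B C v := by
  set n := Module.finrank ℂ (⊤ : Submodule ℂ V) with hn
  constructor
  · intro hs W hA hB hC hv
    by_contra hW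
    have hsub : IsFramedSubrep A B C v 1 W := ⟨le_refl 1, hA, hB, hC, fun _ => hv⟩
    have hlt := hs 1 W hsub (by simp) (by simp [hW])
    set d := Module.finrank ℂ W with hd
    have hdn : d < n := by
      rw [hd, hn, finrank_top]
      exact Submodule.finrank_lt hW
    have h1 : (0:ℝ) < 1 + (d:ℝ) := by positivity
    have h2 : (0:ℝ) < 1 + (n:ℝ) := by positivity
    rw [framedSlope, framedSlope] at hlt
    push_cast at hlt
    rw [div_lt_div_iff₀ h1 h2] at hlt
    have hdn' : (d:ℝ) < n := by exact_mod_cast hdn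
    nlinarith [mul_pos (sub_pos.mpr hθ) (sub_pos.mpr hdn')]
  · intro hg ε W hsub hne0 hne1
    obtain ⟨hε, hA, hB, hC, hv⟩ := hsub
    interval_cases ε
    · have hWb : W ≠ ⊥ := fun h => hne0 ⟨rfl, h⟩
      set d := Module.finrank ℂ W with hd
      have hdpos : 0 < d :=
        Nat.pos_of_ne_zero (fun h => hWb (Submodule.finrank_eq_zero.mp h))
      have hdpos' : (0:ℝ) < d := by exact_mod_cast hdpos
      have h2 : (0:ℝ) < 1 + (n:ℝ) := by positivity
      rw [framedSlope, framedSlope]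
      push_cast
      rw [div_lt_div_iff₀ (by linarith) h2]
      have hdn : (d:ℝ) ≤ n := by
        exact_mod_cast (by rw [hd, hn, finrank_top]; exact Submodule.finrank_le W :
          d ≤ n)
      nlinarith [mul_pos (sub_pos.mpr hθ) hdpos']
    · exact absurd (hg W hA hB hC (hv rfl)) (fun h => hne1 ⟨rfl, h⟩)
end

section
/- Let n and r be natural numbers and let f : (Matrix (Fin n) (Fin n) ℂ)³ × (Fin r → Fin n → ℂ) → ℂ be the map f(A, B, C, v₁, …, v_r) = trace(A·(B·C − C·B)). Then f is a critical point condition for exactly the commuting triples: the Fréchet derivative (over ℂ) of f vanishes at (A, B, C, v₁, …, v_r) if and only if A·B = B·A, B·C = C·B and A·C = C·A. In particular, the critical locus of the trace potential f = Tr(A[B,C]) on the space of framed representations is the set of commuting matrix triples together with arbitrary framing vectors. -/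
/- Equip matrices with the (elementwise sup) norm, giving the space of tuples
`(A, B, C, v₁, …, v_r)` its canonical structure of a finite-dimensional normed
complex vector space. -/
attribute [local instance] Matrix.normedAddCommGroup Matrix.normedSpace

namespace TracePotentialAux

variable (n : ℕ)
abbrev M (n : ℕ) := Matrix (Fin n) (Fin n) ℂ

noncomputable def mulCLM (n : ℕ) : M n →L[ℂ] M n →L[ℂ] M n :=
  LinearMap.toContinuousLinearMap
  { toFun := fun X => LinearMap.toContinuousLinearMap (LinearMap.mul ℂ (M n) X)
    map_add' := by intros; ext; simp [add_mul]
    map_smul' := by intros; ext; simp }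

@[simp] lemma mulCLM_apply (X Y : M n) : mulCLM n X Y = X * Y := rfl

lemma isBddBil (n : ℕ) : IsBoundedBilinearMap ℂ (fun p : M n × M n => p.1 * p.2) :=
  (mulCLM n).isBoundedBilinearMap

variable (r : ℕ)
abbrev E (n r : ℕ) := M n × M n × M n × (Fin r → Fin n → ℂ)

noncomputable def traceCLM (n : ℕ) : M n →L[ℂ] ℂ :=
  LinearMap.toContinuousLinearMap (Matrix.traceLinearMap (Fin n) ℂ ℂ)

@[simp] lemma traceCLM_apply (X : M n) : traceCLM n X = Matrix.trace X := rfl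

section
variable {n r : ℕ} (A B C : M n) (v : Fin r → Fin n → ℂ)

noncomputable def Dmap : E n r →L[ℂ] ℂ :=
  (traceCLM n).comp (((isBddBil n).deriv (A, B*C - C*B)).comp
    ((ContinuousLinearMap.fst ℂ _ _).prod
      ((((isBddBil n).deriv (B, C)).comp
          (((ContinuousLinearMap.fst ℂ (M n) _).comp (ContinuousLinearMap.snd ℂ (M n) _)).prod
            (((ContinuousLinearMap.fst ℂ (M n) _).comp ((ContinuousLinearMap.snd ℂ (M n) _).comp (ContinuousLinearMap.snd ℂ (M n) _)))))) -
       (((isBddBil n).deriv (C, B)).comp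
          ((((ContinuousLinearMap.fst ℂ (M n) _).comp ((ContinuousLinearMap.snd ℂ (M n) _).comp (ContinuousLinearMap.snd ℂ (M n) _)))).prod
            ((ContinuousLinearMap.fst ℂ (M n) _).comp (ContinuousLinearMap.snd ℂ (M n) _)))))))

lemma hasFDeriv : HasFDerivAt
    (fun p : E n r => Matrix.trace (p.1 * (p.2.1 * p.2.2.1 - p.2.2.1 * p.2.1)))
    (Dmap A B C) (A, B, C, v) := by
  have h1 : HasFDerivAt (fun p : E n r => p.1)
      (ContinuousLinearMap.fst ℂ (M n) (M n × M n × (Fin r → Fin n → ℂ))) (A, B, C, v) :=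
    (ContinuousLinearMap.fst ℂ (M n) (M n × M n × (Fin r → Fin n → ℂ))).hasFDerivAt
  have h2 : HasFDerivAt (fun p : E n r => p.2.1)
      ((ContinuousLinearMap.fst ℂ (M n) (M n × (Fin r → Fin n → ℂ))).comp
        (ContinuousLinearMap.snd ℂ (M n) (M n × M n × (Fin r → Fin n → ℂ)))) (A, B, C, v) :=
    ((ContinuousLinearMap.fst ℂ (M n) (M n × (Fin r → Fin n → ℂ))).comp
      (ContinuousLinearMap.snd ℂ (M n) (M n × M n × (Fin r → Fin n → ℂ)))).hasFDerivAt
  have h3 : HasFDerivAt (fun p : E n r => p.2.2.1)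
      ((ContinuousLinearMap.fst ℂ (M n) (Fin r → Fin n → ℂ)).comp
        ((ContinuousLinearMap.snd ℂ (M n) (M n × (Fin r → Fin n → ℂ))).comp
          (ContinuousLinearMap.snd ℂ (M n) (M n × M n × (Fin r → Fin n → ℂ))))) (A, B, C, v) :=
    ((ContinuousLinearMap.fst ℂ (M n) (Fin r → Fin n → ℂ)).comp
      ((ContinuousLinearMap.snd ℂ (M n) (M n × (Fin r → Fin n → ℂ))).comp
        (ContinuousLinearMap.snd ℂ (M n) (M n × M n × (Fin r → Fin n → ℂ))))).hasFDerivAt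
  have hBC : HasFDerivAt (fun p : E n r => p.2.1 * p.2.2.1) _ (A, B, C, v) :=
    HasFDerivAt.comp (g := fun p : M n × M n => p.1 * p.2) ((A, B, C, v) : E n r) ((isBddBil n).hasFDerivAt (B, C)) (h2.prodMk h3)
  have hCB : HasFDerivAt (fun p : E n r => p.2.2.1 * p.2.1) _ (A, B, C, v) :=
    HasFDerivAt.comp (g := fun p : M n × M n => p.1 * p.2) ((A, B, C, v) : E n r) ((isBddBil n).hasFDerivAt (C, B)) (h3.prodMk h2)
  have hmul : HasFDerivAt
      (fun p : E n r => p.1 * (p.2.1 * p.2.2.1 - p.2.2.1 * p.2.1)) _ (A, B, C, v) :=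
    HasFDerivAt.comp (g := fun p : M n × M n => p.1 * p.2) ((A, B, C, v) : E n r) ((isBddBil n).hasFDerivAt (A, B*C - C*B)) (h1.prodMk (hBC.sub hCB))
  exact (traceCLM n).hasFDerivAt.comp ((A, B, C, v) : E n r) hmul

lemma Dmap_apply (q : E n r) :
    Dmap A B C q = Matrix.trace (A * (B * q.2.2.1 + q.2.1 * C - (C * q.2.1 + q.2.2.1 * B))
      + q.1 * (B * C - C * B)) := by
  rfl
end

section
variable {n r : ℕ} (A B C : M n)

lemma eq_zero_of_trace (N : M n) (h : ∀ X : M n, Matrix.trace (X * N) = 0) : N = 0 := by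
  ext i j
  have := h (Matrix.single j i 1)
  simpa [Matrix.trace, Matrix.diag, Matrix.mul_apply, Matrix.single, ite_and,
    Matrix.of_apply] using this

lemma eq_zero_of_trace' (N : M n) (h : ∀ X : M n, Matrix.trace (N * X) = 0) : N = 0 :=
  eq_zero_of_trace N fun X => by rw [Matrix.trace_mul_comm]; exact h X

lemma Dmap_key (q : E n r) :
    Dmap A B C q = Matrix.trace (q.1 * (B * C - C * B))
      + Matrix.trace ((C * A - A * C) * q.2.1)
      + Matrix.trace ((A * B - B * A) * q.2.2.1) := by
  rw [Dmap_apply]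
  simp only [Matrix.mul_sub, Matrix.sub_mul, Matrix.mul_add, Matrix.add_mul, Matrix.trace_sub,
    Matrix.trace_add, ← Matrix.mul_assoc]
  rw [Matrix.trace_mul_cycle A q.2.1 C, Matrix.trace_mul_cycle A q.2.2.1 B]
  ring

theorem main (v : Fin r → Fin n → ℂ) :
    fderiv ℂ
        (fun p : E n r => Matrix.trace (p.1 * (p.2.1 * p.2.2.1 - p.2.2.1 * p.2.1)))
        (A, B, C, v) = 0 ↔
      (A * B = B * A ∧ B * C = C * B ∧ A * C = C * A) := by
  rw [(hasFDeriv A B C v).fderiv]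
  constructor
  · intro h
    have hq : ∀ q : E n r, Dmap A B C q = 0 := fun q => by rw [h]; rfl
    have hBC : B * C - C * B = 0 := by
      refine eq_zero_of_trace _ fun X => ?_
      have := hq (X, 0, 0, 0)
      simpa [Dmap_key] using this
    have hCA : C * A - A * C = 0 := by
      refine eq_zero_of_trace' _ fun Y => ?_
      have := hq (0, Y, 0, 0)
      rw [Dmap_key] at this
      simpa using this
    have hAB : A * B - B * A = 0 := by
      refine eq_zero_of_trace' _ fun Z => ?_
      have := hq (0, 0, Z, 0)
      rw [Dmap_key] at this
      simpa using this
    rw [sub_eq_zero] at hAB hBC hCA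
    exact ⟨hAB, hBC, hCA.symm⟩
  · rintro ⟨hAB, hBC, hAC⟩
    refine ContinuousLinearMap.ext fun q => ?_
    rw [ContinuousLinearMap.zero_apply, Dmap_key, hBC, hAC, hAB]
    simp
end

end TracePotentialAux

/-- The trace potential `f(A, B, C, v₁, …, v_r) = Tr(A·(B·C − C·B))` associated
to the superpotential `W = x[y,z]` on the `r`-framed three-loop quiver has
vanishing Fréchet derivative (over `ℂ`) at `(A, B, C, v)` if and only if the
three matrices pairwise commute: its critical locus is exactly the set of
commuting triples together with arbitrary framing vectors. -/
theorem fderiv_tracePotential_eq_zero_iff_commute (n r : ℕ)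
    (A B C : Matrix (Fin n) (Fin n) ℂ) (v : Fin r → Fin n → ℂ) :
    fderiv ℂ
        (fun p : Matrix (Fin n) (Fin n) ℂ × Matrix (Fin n) (Fin n) ℂ ×
            Matrix (Fin n) (Fin n) ℂ × (Fin r → Fin n → ℂ) =>
          Matrix.trace (p.1 * (p.2.1 * p.2.2.1 - p.2.2.1 * p.2.1)))
        (A, B, C, v) = 0 ↔
      (A * B = B * A ∧ B * C = C * B ∧ A * C = C * A) :=
  TracePotentialAux.main A B C v
end
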